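/- Let n > 8, let 1 ≤ k ≤ 4, and let a1, a2 : Fin n → Fin k → (ZMod 2 × ZMod 2) be matrices such that every column of each sums to zero (for each c, ∑_i a1 i c = 0 and ∑_i a2 i c = 0) and for every row i the multiset {a1 i c : c ∈ Fin k} equals the multiset {a2 i c : c ∈ Fin k}. Then there exists a subset S ⊆ Fin n with 2 ≤ |S| and 2 ≤ |Fin n \ S| such that the multiset {∑_{i∈S} a1 i c : c ∈ Fin k} equals the multiset {∑_{i∈S} a2 i c : c ∈ Fin k}. -/

import Mathlib

/-- Let `n > 8`, `1 ≤ k ≤ 4`, and let `a1 a2 : Fin n → Fin k → ZMod 2 × ZMod 2` be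
matrices (for the 3-Kimura group) such that every column of each sums to zero and, for
every row `i`, the multiset of entries of the `i`-th row of `a1` equals that of `a2`.
Then there is a subset `S ⊆ Fin n` with `2 ≤ |S|` and `2 ≤ |Fin n \ S|` such that the
multiset of column sums of `a1` over `S` equals that of `a2` over `S`. -/
theorem kimura3_prolongation (n k : ℕ) (hn : 8 < n) (hk1 : 1 ≤ k) (hk4 : k ≤ 4)
    (a1 a2 : Fin n → Fin k → ZMod 2 × ZMod 2)
    (h1 : ∀ c : Fin k, ∑ i : Fin n, a1 i c = 0)
    (h2 : ∀ c : Fin k, ∑ i : Fin n, a2 i c = 0)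
    (hrow : ∀ i : Fin n,
      Multiset.map (fun c => a1 i c) (Finset.univ : Finset (Fin k)).val
        = Multiset.map (fun c => a2 i c) (Finset.univ : Finset (Fin k)).val) :
    ∃ S : Finset (Fin n), 2 ≤ S.card ∧ 2 ≤ Sᶜ.card ∧
      Multiset.map (fun c => ∑ i ∈ S, a1 i c) (Finset.univ : Finset (Fin k)).val
        = Multiset.map (fun c => ∑ i ∈ S, a2 i c) (Finset.univ : Finset (Fin k)).val := by
  classical
  obtain ⟨m, rfl⟩ : ∃ m, k = m + 1 := ⟨k - 1, (Nat.succ_pred_eq_of_pos hk1).symm⟩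
  set d : Fin n → Fin (m + 1) → ZMod 2 × ZMod 2 := fun i c => a1 i c + a2 i c with hd
  have two : ∀ x : ZMod 2 × ZMod 2, x + x = 0 := by decide
  have cancel : ∀ x y : ZMod 2 × ZMod 2, x + y = 0 → x = y := by decide
  have hrowsum : ∀ i, ∑ c, d i c = 0 := by
    intro i
    have e : ∑ c, a1 i c = ∑ c, a2 i c := by
      rw [Finset.sum, Finset.sum, hrow i]
    have h : ∑ c, d i c = ∑ c, a1 i c + ∑ c, a2 i c := by
      simp [hd, Finset.sum_add_distrib]
    rw [h, e, two]
  suffices h : ∃ S : Finset (Fin n), 2 ≤ S.card ∧ 2 ≤ Sᶜ.card ∧ ∀ c, ∑ i ∈ S, d i c = 0 by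
    obtain ⟨S, hS1, hS2, hS3⟩ := h
    refine ⟨S, hS1, hS2, ?_⟩
    have hfun : (fun c => ∑ i ∈ S, a1 i c) = (fun c => ∑ i ∈ S, a2 i c) := by
      funext c
      apply cancel
      have := hS3 c
      simpa [hd, Finset.sum_add_distrib] using this
    rw [hfun]
  -- the combinatorial part
  by_cases hzero : ∃ i j : Fin n, i ≠ j ∧ (∀ c, d i c = 0) ∧ (∀ c, d j c = 0)
  · obtain ⟨i, j, hij, hi, hj⟩ := hzero
    refine ⟨{i, j}, ?_, ?_, ?_⟩
    · rw [Finset.card_insert_of_notMem (by simp [hij]), Finset.card_singleton]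
    · have hle : ({i, j} : Finset (Fin n)).card ≤ 2 :=
        (Finset.card_insert_le _ _).trans (by simp)
      rw [Finset.card_compl, Fintype.card_fin]
      omega
    · intro c
      rw [Finset.sum_pair hij, hi c, hj c, add_zero]
  · -- at most one zero row
    set Z : Finset (Fin n) := Finset.univ.filter (fun i => ∀ c, d i c = 0) with hZdef
    have hZ : Z.card ≤ 1 := by
      rw [Finset.card_le_one]
      intro a ha b hb
      by_contra hab
      exact hzero ⟨a, b, hab, (Finset.mem_filter.mp ha).2, (Finset.mem_filter.mp hb).2⟩
    have hN : 7 ≤ Zᶜ.card := by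
      rw [Finset.card_compl, Fintype.card_fin]
      omega
    obtain ⟨T, hTsub, hTcard⟩ := Finset.exists_subset_card_eq hN
    -- pigeonhole on subsets of T
    have cardV : (Finset.univ.filter
        (fun f : Fin (m + 1) → ZMod 2 × ZMod 2 => ∑ c, f c = 0)).card ≤ 4 ^ m := by
      have hinj : Set.InjOn (fun f : Fin (m + 1) → ZMod 2 × ZMod 2 => f ∘ Fin.castSucc)
          ↑(Finset.univ.filter (fun f : Fin (m + 1) → ZMod 2 × ZMod 2 => ∑ c, f c = 0)) := by
        intro f hf g hg hfg
        simp only [Finset.coe_filter, Set.mem_setOf_eq, Finset.mem_univ, true_and] at hf hg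
        have hcs : ∀ c : Fin m, f (Fin.castSucc c) = g (Fin.castSucc c) :=
          fun c => congrFun hfg c
        have hsum : ∑ c : Fin m, f (Fin.castSucc c) = ∑ c : Fin m, g (Fin.castSucc c) :=
          Finset.sum_congr rfl fun c _ => hcs c
        rw [Fin.sum_univ_castSucc] at hf hg
        have hlast : f (Fin.last m) = g (Fin.last m) := by
          have e1 : f (Fin.last m) = -∑ c : Fin m, f (Fin.castSucc c) :=
            eq_neg_of_add_eq_zero_right hf
          have e2 : g (Fin.last m) = -∑ c : Fin m, g (Fin.castSucc c) :=
            eq_neg_of_add_eq_zero_right hg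
          rw [e1, e2, hsum]
        funext i
        exact Fin.lastCases hlast (fun c => hcs c) i
      calc (Finset.univ.filter
            (fun f : Fin (m + 1) → ZMod 2 × ZMod 2 => ∑ c, f c = 0)).card
          ≤ (Finset.univ : Finset (Fin m → ZMod 2 × ZMod 2)).card :=
            Finset.card_le_card_of_injOn _ (fun _ _ => Finset.mem_univ _) hinj
        _ = 4 ^ m := by
            rw [Finset.card_univ, Fintype.card_fun, Fintype.card_fin]
            norm_num
    have hlt : (Finset.univ.filter
        (fun f : Fin (m + 1) → ZMod 2 × ZMod 2 => ∑ c, f c = 0)).card < T.powerset.card := by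
      rw [Finset.card_powerset, hTcard]
      have hm3 : m ≤ 3 := Nat.succ_le_succ_iff.mp hk4
      have h4 : (4 : ℕ) ^ m ≤ 4 ^ 3 := Nat.pow_le_pow_right (by norm_num) hm3
      exact lt_of_le_of_lt (cardV.trans h4) (by norm_num)
    have hmaps : ∀ A ∈ T.powerset, (fun c => ∑ i ∈ A, d i c) ∈
        Finset.univ.filter (fun f : Fin (m + 1) → ZMod 2 × ZMod 2 => ∑ c, f c = 0) := by
      intro A hA
      simp only [Finset.mem_filter, Finset.mem_univ, true_and]
      rw [Finset.sum_comm]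
      exact Finset.sum_eq_zero fun i _ => hrowsum i
    obtain ⟨A, hA, B, hB, hAB, hfAB⟩ :=
      Finset.exists_ne_map_eq_of_card_lt_of_maps_to hlt hmaps
    rw [Finset.mem_powerset] at hA hB
    set S : Finset (Fin n) := (A \ B) ∪ (B \ A) with hSdef
    have hsumS : ∀ c, ∑ i ∈ S, d i c = 0 := by
      intro c
      have hAc : ∑ i ∈ A, d i c = ∑ i ∈ B, d i c := congrFun hfAB c
      have hdisj : Disjoint (A \ B) (B \ A) := disjoint_sdiff_sdiff
      rw [hSdef, Finset.sum_union hdisj]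
      have e1 : ∑ i ∈ A \ B, d i c = ∑ i ∈ A, d i c - ∑ i ∈ A ∩ B, d i c := by
        rw [← Finset.sdiff_inter_self_left A B]
        exact Finset.sum_sdiff_eq_sub Finset.inter_subset_left
      have e2 : ∑ i ∈ B \ A, d i c = ∑ i ∈ B, d i c - ∑ i ∈ A ∩ B, d i c := by
        rw [← Finset.sdiff_inter_self_right B A]
        exact Finset.sum_sdiff_eq_sub Finset.inter_subset_right
      rw [e1, e2, ← hAc]
      exact two _
    have hST : S ⊆ T := by
      rw [hSdef]
      exact Finset.union_subset ((Finset.sdiff_subset).trans hA)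
        ((Finset.sdiff_subset).trans hB)
    have hSne : S ≠ ∅ := by
      intro h
      rw [hSdef, Finset.union_eq_empty, Finset.sdiff_eq_empty_iff_subset,
        Finset.sdiff_eq_empty_iff_subset] at h
      exact hAB (Finset.Subset.antisymm h.1 h.2)
    have hScard1 : S.card ≠ 1 := by
      intro h
      obtain ⟨i, hi⟩ := Finset.card_eq_one.mp h
      have hiT : i ∈ T := hST (hi ▸ Finset.mem_singleton_self i)
      have hiZ : i ∈ Zᶜ := hTsub hiT
      rw [Finset.mem_compl, hZdef, Finset.mem_filter] at hiZ
      push_neg at hiZ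
      obtain ⟨c, hc⟩ := hiZ (Finset.mem_univ i)
      apply hc
      have := hsumS c
      rw [hi, Finset.sum_singleton] at this
      exact this
    have hScard : 2 ≤ S.card := by
      have h0 : S.card ≠ 0 := fun h => hSne (Finset.card_eq_zero.mp h)
      rcases Nat.lt_or_ge S.card 2 with h | h
      · rcases Nat.le_one_iff_eq_zero_or_eq_one.mp (Nat.lt_succ_iff.mp h) with h' | h'
        · exact absurd h' h0
        · exact absurd h' hScard1
      · exact h
    have hScard7 : S.card ≤ 7 := le_of_le_of_eq (Finset.card_le_card hST) hTcard
    refine ⟨S, hScard, ?_, hsumS⟩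
    rw [Finset.card_compl, Fintype.card_fin]
    exact Nat.le_sub_of_add_le (le_trans (Nat.add_le_add_left hScard7 2) hn)
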